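/- Let A ∈ ℝ^{n×n} be symmetric positive semidefinite and S ⊆ [n]. Define the Nyström approximation A⟨S⟩ := A_{:,S} (A_{S,S})† A_{S,:} and the orthogonal projector P := I − A^{1/2} e_S (e_Sᵀ A e_S)† e_Sᵀ A^{1/2} onto null(e_Sᵀ A^{1/2}), where e_S ∈ ℝ^{n×|S|} has as columns the standard basis vectors indexed by S. Then the residual matrix satisfies A − A⟨S⟩ = A^{1/2} P A^{1/2}. -/

import Mathlib

open Matrix

/-- `Mp` is the Moore–Penrose pseudoinverse of `M` (the four Penrose conditions,
which characterize it uniquely). -/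
def IsMoorePenrose {k l : Type*} [Fintype k] [Fintype l]
    (M : Matrix k l ℝ) (Mp : Matrix l k ℝ) : Prop :=
  M * Mp * M = M ∧ Mp * M * Mp = Mp ∧ (M * Mp)ᵀ = M * Mp ∧ (Mp * M)ᵀ = Mp * M

open scoped ComplexOrder in
/-- The square root of a positive semidefinite matrix, as `Matrix.PosSemidef.sqrt` was defined
in Mathlib of December 2024 (since removed from Mathlib). -/
noncomputable def Matrix.PosSemidef.sqrt {n 𝕜 : Type*} [Fintype n] [RCLike 𝕜] [DecidableEq n]
    {A : Matrix n n 𝕜} (hA : A.PosSemidef) : Matrix n n 𝕜 :=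
  hA.1.eigenvectorUnitary.1 * diagonal ((↑) ∘ (√·) ∘ hA.1.eigenvalues) *
    (star hA.1.eigenvectorUnitary : Matrix n n 𝕜)

lemma Matrix.PosSemidef.sqrt_mul_self {n : Type*} [Fintype n] [DecidableEq n]
    {A : Matrix n n ℝ} (hA : A.PosSemidef) : hA.sqrt * hA.sqrt = A := by
  conv_rhs => rw [hA.1.spectral_theorem, Unitary.conjStarAlgAut_apply]
  unfold Matrix.PosSemidef.sqrt
  have hU : (star hA.1.eigenvectorUnitary : Matrix n n ℝ) * hA.1.eigenvectorUnitary.1 = 1 :=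
    Unitary.coe_star_mul_self _
  have hD : diagonal ((RCLike.ofReal : ℝ → ℝ) ∘ (√·) ∘ hA.1.eigenvalues) * diagonal ((RCLike.ofReal : ℝ → ℝ) ∘ (√·) ∘ hA.1.eigenvalues)
      = diagonal (RCLike.ofReal ∘ hA.1.eigenvalues : n → ℝ) := by
    rw [diagonal_mul_diagonal]
    congr 1
    funext i
    simp [Real.mul_self_sqrt (hA.eigenvalues_nonneg i)]
  calc _ = (hA.1.eigenvectorUnitary.1 * diagonal ((RCLike.ofReal : ℝ → ℝ) ∘ (√·) ∘ hA.1.eigenvalues)) *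
        ((star hA.1.eigenvectorUnitary : Matrix n n ℝ) * hA.1.eigenvectorUnitary.1) *
        (diagonal ((RCLike.ofReal : ℝ → ℝ) ∘ (√·) ∘ hA.1.eigenvalues) * (star hA.1.eigenvectorUnitary : Matrix n n ℝ)) := by
        simp only [Matrix.mul_assoc]
    _ = _ := by rw [hU, Matrix.mul_one, Matrix.mul_assoc, ← Matrix.mul_assoc _ _ (star _ : Matrix n n ℝ), hD, ← Matrix.mul_assoc]


lemma IsMoorePenrose.unique {k l : Type*} [Fintype k] [Fintype l]
    (M : Matrix k l ℝ) (P Q : Matrix l k ℝ)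
    (hP : IsMoorePenrose M P) (hQ : IsMoorePenrose M Q) : P = Q := by
  obtain ⟨hP1, hP2, hP3, hP4⟩ := hP
  obtain ⟨hQ1, hQ2, hQ3, hQ4⟩ := hQ
  have key1 : (Q * M)ᵀ * (P * M)ᵀ = P * M := by
    calc (Q * M)ᵀ * (P * M)ᵀ = (M * Q * M)ᵀ * Pᵀ := by
          simp only [Matrix.transpose_mul, Matrix.mul_assoc]
    _ = Mᵀ * Pᵀ := by rw [hQ1]
    _ = (P * M)ᵀ := (Matrix.transpose_mul P M).symm
    _ = P * M := hP4
  have key2 : (Q * M)ᵀ * (P * M)ᵀ = Q * M := by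
    rw [hQ4, hP4]
    calc Q * M * (P * M) = Q * (M * P * M) := by simp only [Matrix.mul_assoc]
    _ = Q * M := by rw [hP1]
  have h1 : P * M = Q * M := key1.symm.trans key2
  have key3 : (M * P)ᵀ * (M * Q)ᵀ = M * P := by
    calc (M * P)ᵀ * (M * Q)ᵀ = Pᵀ * (M * Q * M)ᵀ := by
          simp only [Matrix.transpose_mul, Matrix.mul_assoc]
    _ = Pᵀ * Mᵀ := by rw [hQ1]
    _ = (M * P)ᵀ := (Matrix.transpose_mul M P).symm
    _ = M * P := hP3
  have key4 : (M * P)ᵀ * (M * Q)ᵀ = M * Q := by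
    rw [hP3, hQ3]
    calc M * P * (M * Q) = M * P * M * Q := by simp only [Matrix.mul_assoc]
    _ = M * Q := by rw [hP1]
  have h2 : M * P = M * Q := key3.symm.trans key4
  calc P = P * M * P := hP2.symm
  _ = Q * M * P := by rw [h1]
  _ = Q * (M * P) := by rw [Matrix.mul_assoc]
  _ = Q * (M * Q) := by rw [h2]
  _ = Q * M * Q := by rw [Matrix.mul_assoc]
  _ = Q := hQ2

/-- Nyström residual as a projected matrix. For psd `A` and
`S ⊆ [n]`, with `A⟨S⟩ = A_{:,S}(A_{S,S})† A_{S,:}` and the orthogonal projector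
`P = I − A^{1/2} e_S (e_Sᵀ A e_S)† e_Sᵀ A^{1/2}` onto `null(e_Sᵀ A^{1/2})`, the
residual satisfies `A − A⟨S⟩ = A^{1/2} P A^{1/2}`. -/
theorem stmt_11 {n : ℕ}
    (A : Matrix (Fin n) (Fin n) ℝ) (hA : A.PosSemidef)
    (S : Finset (Fin n))
    -- `sq = A^{1/2}`, the psd square root of `A`
    (sq : Matrix (Fin n) (Fin n) ℝ) (hsq : sq = hA.sqrt)
    -- `eS` has as columns the standard basis vectors indexed by `S`
    (eS : Matrix (Fin n) {j // j ∈ S} ℝ)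
    (heS : eS = Matrix.of fun i j => if i = j.val then 1 else 0)
    -- `W1 = (A_{S,S})†` and `W2 = (e_Sᵀ A e_S)†`
    (W1 : Matrix {j // j ∈ S} {j // j ∈ S} ℝ)
    (hW1 : IsMoorePenrose (A.submatrix (fun j : {j // j ∈ S} => (j : Fin n))
      (fun j : {j // j ∈ S} => (j : Fin n))) W1)
    (W2 : Matrix {j // j ∈ S} {j // j ∈ S} ℝ)
    (hW2 : IsMoorePenrose (eSᵀ * A * eS) W2)
    -- the projector `P = I − A^{1/2} e_S (e_Sᵀ A e_S)† e_Sᵀ A^{1/2}`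
    (P : Matrix (Fin n) (Fin n) ℝ)
    (hP : P = 1 - sq * eS * W2 * eSᵀ * sq) :
    A - A.submatrix id (fun j : {j // j ∈ S} => (j : Fin n)) * W1 *
        A.submatrix (fun j : {j // j ∈ S} => (j : Fin n)) id =
      sq * P * sq := by
  have hBA : eSᵀ * A * eS = A.submatrix (fun j : {j // j ∈ S} => (j : Fin n))
      (fun j : {j // j ∈ S} => (j : Fin n)) := by
    ext i j
    simp [heS, Matrix.mul_apply, Matrix.transpose_apply]
  have hW : W1 = W2 := IsMoorePenrose.unique _ W1 W2 hW1 (hBA ▸ hW2)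
  have hcol : A.submatrix id (fun j : {j // j ∈ S} => (j : Fin n)) = A * eS := by
    ext i j
    simp [heS, Matrix.mul_apply]
  have hrow : A.submatrix (fun j : {j // j ∈ S} => (j : Fin n)) id = eSᵀ * A := by
    ext i j
    simp [heS, Matrix.mul_apply, Matrix.transpose_apply]
  have hsqsq : sq * sq = A := by rw [hsq]; exact hA.sqrt_mul_self
  rw [hP, hW, hcol, hrow, ← hsqsq]
  simp only [Matrix.mul_sub, Matrix.sub_mul, Matrix.mul_one, Matrix.one_mul,
    Matrix.mul_assoc]
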